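/- Define the polynomial Kreweras triangle (K_{n,k}) in ℤ[x] for n ≥ 1 and 1 ≤ k ≤ n by K_{1,1} = x, K_{0,1} = 1, and for n ≥ 2: K_{n,1} = (x-1)K_{n-1,1} - K_{n-1,2} - ... - K_{n-1,n-1}; K_{n,2} = 2K_{n,1} + K_{n-1,1} - x^2 K_{n-2,1}; and for 3 ≤ k ≤ n, K_{n,k} = 2K_{n,k-1} - K_{n,k-2} + K_{n-1,k-1} + K_{n-1,k-2} + 2x K_{n-2,k-2}. Then for all n ≥ 1 and 1 ≤ k ≤ n, K_{n,n+1-k} = K_{n,k}. -/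

import Mathlib

open Polynomial

private lemma peelf (g : ℕ → Polynomial ℤ) (t c : ℕ) :
    ∑ i ∈ Finset.range (t+1), g (i+c) = g c + ∑ i ∈ Finset.range t, g (i+1+c) := by
  rw [Finset.sum_range_succ']
  rw [show (0:ℕ)+c = c by omega, add_comm]

private lemma peelb (g : ℕ → Polynomial ℤ) (t c : ℕ) :
    ∑ i ∈ Finset.range (t+1), g (i+c) = (∑ i ∈ Finset.range t, g (i+c)) + g (t+c) :=
  Finset.sum_range_succ _ _

theorem polyKreweras_symmetry (K : ℕ → ℕ → Polynomial ℤ)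
    (hK01 : K 0 1 = 1)
    (hK11 : K 1 1 = X)
    (hrec1 : ∀ n, 2 ≤ n → K n 1 = (X - 1) * K (n - 1) 1 - ∑ i ∈ Finset.Icc 2 (n - 1), K (n - 1) i)
    (hrec2 : ∀ n, 2 ≤ n → K n 2 = 2 * K n 1 + K (n - 1) 1 - X ^ 2 * K (n - 2) 1)
    (hreck : ∀ n k, 3 ≤ k → k ≤ n →
      K n k = 2 * K n (k - 1) - K n (k - 2) + K (n - 1) (k - 1) + K (n - 1) (k - 2)
        + 2 * X * K (n - 2) (k - 2)) :
    ∀ n k, 1 ≤ k → k ≤ n → K n (n + 1 - k) = K n k := by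
  intro n
  induction n using Nat.strong_induction_on with
  | _ n IH =>
  rcases lt_or_ge n 3 with h3 | h3
  · -- small cases n = 0, 1, 2
    interval_cases n
    · intro k h1 h2; omega
    · intro k h1 h2
      have : k = 1 := by omega
      subst this; norm_num
    · -- n = 2
      have a : K 2 1 = (X-1)*X := by
        have := hrec1 2 le_rfl
        norm_num at this
        rw [hK11] at this
        exact this
      have b : K 2 2 = K 2 1 := by
        have hb := hrec2 2 le_rfl
        norm_num [hK11, hK01] at hb
        rw [hb, a]; ring
      intro k h1 h2
      interval_cases k
      · norm_num [b]
      · norm_num [b]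
  · obtain ⟨m, rfl⟩ : ∃ m, n = m+3 := ⟨n-3, by omega⟩
    -- step lemma: E (j+2) = 2 E (j+1) - E j
    have hstep : ∀ j, 1 ≤ j → j + 2 ≤ m+3 →
        K (m+3) (j+2) - K (m+3) (m+4-(j+2))
          = 2*(K (m+3) (j+1) - K (m+3) (m+4-(j+1))) - (K (m+3) j - K (m+3) (m+4-j)) := by
      intro j hj1 hj2
      have hf := hreck (m+3) (j+2) (by omega) hj2
      norm_num at hf
      rw [show m+3-2 = m+1 by omega] at hf
      have hr := hreck (m+3) (m+4-j) (by omega) (by omega)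
      norm_num at hr
      rw [show m+3-2 = m+1 by omega] at hr
      rw [show m+4-j-1 = m+3-j by omega, show m+4-j-2 = m+2-j by omega] at hr
      have s1 : K (m+2) (m+3-j) = K (m+2) j := by
        have := IH (m+2) (by omega) j hj1 (by omega)
        rw [show m+2+1-j = m+3-j by omega] at this
        exact this
      have s2 : K (m+2) (m+2-j) = K (m+2) (j+1) := by
        have := IH (m+2) (by omega) (j+1) (by omega) (by omega)
        rw [show m+2+1-(j+1) = m+2-j by omega] at this
        exact this
      have s3 : K (m+1) (m+2-j) = K (m+1) j := by
        have := IH (m+1) (by omega) j hj1 (by omega)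
        rw [show m+1+1-j = m+2-j by omega] at this
        exact this
      rw [show m+4-(j+2) = m+2-j by omega, show m+4-(j+1) = m+3-j by omega]
      linear_combination hf - hr - s1 - s2 - 2*X*s3
    -- the E 2 = E 1 identity via row summation
    have hd : K (m+3) 2 - K (m+3) (m+2) = K (m+3) 1 - K (m+3) (m+3) := by
      have hs : (∑ i ∈ Finset.range (m+1), K (m+3) (i+3))
          = ∑ i ∈ Finset.range (m+1), (2*K (m+3) (i+2) - K (m+3) (i+1)
              + K (m+2) (i+2) + K (m+2) (i+1) + 2*X*K (m+1) (i+1)) := by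
        refine Finset.sum_congr rfl fun i hi => ?_
        have hm := Finset.mem_range.mp hi
        have h := hreck (m+3) (i+3) (by omega) (by omega)
        norm_num at h
        rw [show m+3-2 = m+1 by omega, show i+3-2 = i+1 by omega] at h
        linear_combination h
      simp only [Finset.sum_add_distrib, Finset.sum_sub_distrib, ← Finset.mul_sum] at hs
      -- pa : SA = a1 + a2 + T3
      have pa : (∑ i ∈ Finset.range (m+3), K (m+3) (i+1))
          = K (m+3) 1 + K (m+3) 2 + ∑ i ∈ Finset.range (m+1), K (m+3) (i+3) := by
        have h1 := peelf (K (m+3)) (m+2) 1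
        have h2 := peelf (K (m+3)) (m+1) 2
        norm_num at h1 h2
        rw [h1, h2]; ring
      -- pb : SA = T2 + a1 + aN
      have pb : (∑ i ∈ Finset.range (m+3), K (m+3) (i+1))
          = (∑ i ∈ Finset.range (m+1), K (m+3) (i+2)) + K (m+3) 1 + K (m+3) (m+3) := by
        have h1 := peelf (K (m+3)) (m+2) 1
        have h2 := peelb (K (m+3)) (m+1) 2
        norm_num at h1 h2
        rw [h1, h2]; ring
      -- pc : SA = T1 + aN1 + aN
      have pc : (∑ i ∈ Finset.range (m+3), K (m+3) (i+1))
          = (∑ i ∈ Finset.range (m+1), K (m+3) (i+1)) + K (m+3) (m+2) + K (m+3) (m+3) := by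
        have h1 := peelb (K (m+3)) (m+2) 1
        have h2 := peelb (K (m+3)) (m+1) 1
        norm_num at h1 h2
        rw [h1, h2]
      -- pd : SB = b1 + U2
      have pd : (∑ i ∈ Finset.range (m+2), K (m+2) (i+1))
          = K (m+2) 1 + ∑ i ∈ Finset.range (m+1), K (m+2) (i+2) := by
        have h1 := peelf (K (m+2)) (m+1) 1
        norm_num at h1
        rw [h1]
      -- pe : SB = U1 + bN
      have pe : (∑ i ∈ Finset.range (m+2), K (m+2) (i+1))
          = (∑ i ∈ Finset.range (m+1), K (m+2) (i+1)) + K (m+2) (m+2) := by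
        have h1 := peelb (K (m+2)) (m+1) 1
        norm_num at h1
        rw [h1]
      -- pf : SC = c1 + V
      have pf : (∑ i ∈ Finset.range (m+1), K (m+1) (i+1))
          = K (m+1) 1 + ∑ i ∈ Finset.range m, K (m+1) (i+2) := by
        have h1 := peelf (K (m+1)) m 1
        norm_num at h1
        rw [h1]
      -- recurrences at top of rows
      have h1 : K (m+3) 1 = (X-1)*K (m+2) 1 - ∑ i ∈ Finset.range (m+1), K (m+2) (i+2) := by
        have h := hrec1 (m+3) (by omega)
        norm_num at h
        rw [show Finset.Icc 2 (m+2) = Finset.Ico 2 (m+3) from (Finset.Ico_add_one_right_eq_Icc 2 (m+2)).symm,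
          Finset.sum_Ico_eq_sum_range, show m+3-2 = m+1 by omega] at h
        rw [h]
        congr 1
        exact Finset.sum_congr rfl fun i _ => by rw [show 2+i = i+2 by omega]
      have h2 : K (m+3) 2 = 2*K (m+3) 1 + K (m+2) 1 - X^2*K (m+1) 1 := by
        have h := hrec2 (m+3) (by omega)
        norm_num at h
        rw [show m+3-2 = m+1 by omega] at h
        exact h
      have h1' : K (m+2) 1 = (X-1)*K (m+1) 1 - ∑ i ∈ Finset.range m, K (m+1) (i+2) := by
        have h := hrec1 (m+2) (by omega)
        norm_num at h
        rw [show Finset.Icc 2 (m+1) = Finset.Ico 2 (m+2) from (Finset.Ico_add_one_right_eq_Icc 2 (m+1)).symm,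
          Finset.sum_Ico_eq_sum_range, show m+2-2 = m by omega] at h
        rw [h]
        congr 1
        exact Finset.sum_congr rfl fun i _ => by rw [show 2+i = i+2 by omega]
      have hbn : K (m+2) (m+2) = K (m+2) 1 := by
        have := IH (m+2) (by omega) 1 le_rfl (by omega)
        rw [show m+2+1-1 = m+2 by omega] at this
        exact this
      linear_combination hs + pa - 2*pb + pc + pd - pe + 2*h1 + 2*h2 + 2*X*h1' + 2*X*pf - hbn
    -- E j = E 1 for all j
    have main : ∀ j, 1 ≤ j → j ≤ m+3 →
        K (m+3) j - K (m+3) (m+4-j) = K (m+3) 1 - K (m+3) (m+3) := by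
      intro j
      induction j using Nat.strong_induction_on with
      | _ j ihj =>
      intro hj1 hj2
      rcases j with _ | _ | _ | i
      · omega
      · rw [show m+4-1 = m+3 by omega]
      · rw [show m+4-2 = m+2 by omega]; exact hd
      · have e := hstep (i+1) (by omega) (by omega)
        rw [show i+1+2 = i+3 by omega, show i+1+1 = i+2 by omega] at e
        have r1 := ihj (i+2) (by omega) (by omega) (by omega)
        have r2 := ihj (i+1) (by omega) (by omega) (by omega)
        rw [e, r1, r2]; ring
    have hE0 : K (m+3) 1 = K (m+3) (m+3) := by
      have h := main (m+3) (by omega) le_rfl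
      rw [show m+4-(m+3) = 1 by omega] at h
      have h2 : (2 : Polynomial ℤ) * (K (m+3) 1 - K (m+3) (m+3)) = 0 := by
        linear_combination -h
      rcases mul_eq_zero.mp h2 with h' | h'
      · exact absurd h' two_ne_zero
      · exact sub_eq_zero.mp h'
    intro k hk1 hkn
    have h := main k hk1 hkn
    rw [hE0, sub_self] at h
    rw [show m+3+1-k = m+4-k by omega]
    exact (sub_eq_zero.mp h).symm
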